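/- Let Φ : (0,∞) → ℝ have the Thomas–Fermi potential properties, let λ > 0, and let n be a real number with 0 < n < n(λ,0). Then there exists a unique μ* > 0 such that n(λ,μ*) = n, and the supremum defining the canonical energy e(λ,n) = sup_{μ ≥ 0} (e_G(λ,μ) − μn) is attained at μ = μ*, i.e. e(λ,n) = e_G(λ,μ*) − μ*·n. -/

import Mathlib

open MeasureTheory Real Filter Set

/-- The semiclassical grand canonical energy
`e_G(λ,μ) = −(2/(3π)) ∫₀^∞ (Φ(r) − λ²r⁻² − μ)₊^{3/2} dr`. -/
noncomputable def eG (Φ : ℝ → ℝ) (lam μ : ℝ) : ℝ :=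
  -(2 / (3 * π)) * ∫ r in Ioi (0:ℝ), (max (Φ r - lam ^ 2 / r ^ 2 - μ) 0) ^ ((3:ℝ)/2)

/-- The semiclassical counting function
`n(λ,μ) = (1/π) ∫₀^∞ (Φ(r) − λ²r⁻² − μ)₊^{1/2} dr`. -/
noncomputable def nSC (Φ : ℝ → ℝ) (lam μ : ℝ) : ℝ :=
  (1 / π) * ∫ r in Ioi (0:ℝ), (max (Φ r - lam ^ 2 / r ^ 2 - μ) 0) ^ ((1:ℝ)/2)

/-- `Φ` has the Thomas–Fermi potential properties: continuous and positive on `(0,∞)`,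
`r·Φ(r) → 1` as `r → 0+`, and `Φ(r) ≤ C r⁻⁴` for `r ≥ 1`. -/
def HasTF (Φ : ℝ → ℝ) : Prop :=
  ContinuousOn Φ (Ioi 0) ∧ (∀ r, 0 < r → 0 < Φ r) ∧
  Tendsto (fun r => r * Φ r) (nhdsWithin 0 (Ioi 0)) (nhds 1) ∧
  ∃ C, 0 < C ∧ ∀ r, 1 ≤ r → Φ r ≤ C / r ^ 4

/-- The canonical energy `e(λ,n) = sup_{μ ≥ 0} (e_G(λ,μ) − μn)`. -/
noncomputable def eCan (Φ : ℝ → ℝ) (lam n : ℝ) : ℝ :=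
  sSup ((fun μ => eG Φ lam μ - μ * n) '' Ici 0)

/-- For a Thomas–Fermi potential `Φ`, `λ > 0` and `0 < n < n(λ,0)`, there
is a unique `μ* > 0` with `n(λ,μ*) = n`, and the supremum defining `e(λ,n)` is attained
there: `e(λ,n) = e_G(λ,μ*) − μ*·n`. -/
noncomputable def fI (Φ : ℝ → ℝ) (lam p μ r : ℝ) : ℝ :=
  (max (Φ r - lam ^ 2 / r ^ 2 - μ) 0) ^ p

lemma fI_nonneg (Φ : ℝ → ℝ) (lam p μ r : ℝ) : 0 ≤ fI Φ lam p μ r :=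
  Real.rpow_nonneg (le_max_right _ _) _

lemma fI_continuousOn {Φ : ℝ → ℝ} (hc : ContinuousOn Φ (Ioi 0)) (lam : ℝ) {p : ℝ}
    (hp : 0 ≤ p) (μ : ℝ) : ContinuousOn (fI Φ lam p μ) (Ioi 0) := by
  apply ContinuousOn.rpow_const
  · exact (continuous_id'.max continuous_const).comp_continuousOn
      ((hc.sub ((continuousOn_const.div ((continuous_pow 2).continuousOn)
        (fun r hr => pow_ne_zero 2 (ne_of_gt hr))))).sub continuousOn_const)
  · exact fun x _ => Or.inr hp

lemma fI_mono {Φ : ℝ → ℝ} {lam p : ℝ} (hp : 0 ≤ p) {μ1 μ2 : ℝ} (h : μ1 ≤ μ2) (r : ℝ) :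
    fI Φ lam p μ2 r ≤ fI Φ lam p μ1 r :=
  Real.rpow_le_rpow (le_max_right _ _)
    (max_le_max (by linarith) le_rfl) hp

lemma bound_above {Φ : ℝ → ℝ} (hΦ : HasTF Φ) {lam : ℝ} (hlam : 0 < lam) :
    ∃ M, 0 < M ∧ ∀ r, 0 < r → Φ r - lam ^ 2 / r ^ 2 ≤ M := by
  obtain ⟨hc, hpos, hlim, C, hC, hdec⟩ := hΦ
  have h2 : ∀ᶠ r in nhdsWithin 0 (Ioi 0), r * Φ r < 2 :=
    hlim.eventually_lt_const (by norm_num)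
  rw [eventually_nhdsWithin_iff, Metric.eventually_nhds_iff] at h2
  obtain ⟨δ, hδ, hδ2⟩ := h2
  set r₁ : ℝ := min (min δ (lam ^ 2 / 2)) 1 with hr₁def
  have hr₁0 : 0 < r₁ := by positivity
  have hr₁1 : r₁ ≤ 1 := min_le_right _ _
  obtain ⟨B, hB⟩ := (isCompact_Icc (a := r₁) (b := 1)).exists_bound_of_continuousOn
    (hc.mono (fun x hx => lt_of_lt_of_le hr₁0 hx.1))
  refine ⟨max B C + 1, by positivity, fun r hr => ?_⟩
  have hinv : 0 < lam ^ 2 / r ^ 2 := by positivity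
  rcases lt_or_ge r r₁ with h | h
  · have hδr : r < δ := lt_of_lt_of_le h ((min_le_left _ _).trans (min_le_left _ _))
    have h2r : 2 * r ≤ lam ^ 2 := by
      have : r ≤ lam ^ 2 / 2 := (le_of_lt (lt_of_lt_of_le h
        ((min_le_left _ _).trans (min_le_right _ _))))
      linarith
    have hΦr : r * Φ r < 2 := hδ2 (by simpa [abs_of_pos hr] using hδr) hr
    have hΦr' : Φ r < 2 / r := by
      rw [lt_div_iff₀ hr]; linarith [hΦr]
    have : Φ r - lam ^ 2 / r ^ 2 ≤ 0 := by
      have h1 : 2 / r ≤ lam ^ 2 / r ^ 2 := by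
        rw [div_le_div_iff₀ hr (by positivity)]
        calc 2 * r ^ 2 = (2 * r) * r := by ring
        _ ≤ lam ^ 2 * r := by nlinarith
      linarith
    have hmc : (0:ℝ) < max B C := lt_max_iff.mpr (Or.inr hC)
    linarith
  · rcases le_or_gt r 1 with h1 | h1
    · have := hB r ⟨h, h1⟩
      have : Φ r ≤ B := le_of_abs_le (by simpa using this)
      have hBM : B ≤ max B C := le_max_left _ _
      linarith
    · have hd := hdec r h1.le
      have : C / r ^ 4 ≤ C := by
        rw [div_le_iff₀ (by positivity)]
        have h4 : (1:ℝ) ≤ r ^ 4 := one_le_pow₀ h1.le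
        nlinarith
      have hCM : C ≤ max B C := le_max_right _ _
      linarith

lemma integrable_fI {Φ : ℝ → ℝ} (hΦ : HasTF Φ) {lam : ℝ} (hlam : 0 < lam) {p : ℝ}
    (hp : 1/2 ≤ p) {μ : ℝ} (hμ : 0 ≤ μ) :
    IntegrableOn (fI Φ lam p μ) (Ioi 0) := by
  obtain ⟨M, hM0, hM⟩ := bound_above hΦ hlam
  obtain ⟨hc, hpos, hlim, C, hC, hdec⟩ := hΦ
  have hp0 : 0 ≤ p := by linarith
  have hmeas : ∀ s : Set ℝ, s ⊆ Ioi 0 → MeasurableSet s →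
      AEStronglyMeasurable (fI Φ lam p μ) (volume.restrict s) := fun s hs hms =>
    ((fI_continuousOn hc lam hp0 μ).mono hs).aestronglyMeasurable hms
  have key : Ioc (0:ℝ) 1 ∪ Ioi 1 = Ioi 0 := Ioc_union_Ioi_eq_Ioi zero_le_one
  rw [← key]
  refine IntegrableOn.union ?_ ?_
  · refine Integrable.mono' (g := fun _ => (max M 0) ^ p)
      (integrableOn_const measure_Ioc_lt_top.ne)
      (hmeas _ (fun x hx => hx.1) measurableSet_Ioc) ?_
    rw [ae_restrict_iff' measurableSet_Ioc]
    filter_upwards with r hr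
    rw [Real.norm_of_nonneg (fI_nonneg _ _ _ _ _)]
    refine Real.rpow_le_rpow (le_max_right _ _) (max_le_max ?_ le_rfl) hp0
    have := hM r hr.1; linarith
  · refine Integrable.mono' (g := fun r => C ^ p * r ^ (-(4*p)))
      (((integrableOn_Ioi_rpow_of_lt (by linarith) one_pos).const_mul _))
      (hmeas _ (fun x hx => mem_Ioi.mpr (lt_trans one_pos hx)) measurableSet_Ioi) ?_
    rw [ae_restrict_iff' measurableSet_Ioi]
    filter_upwards with r hr
    rw [Real.norm_of_nonneg (fI_nonneg _ _ _ _ _)]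
    have hr0 : (0:ℝ) < r := lt_trans one_pos hr
    have h1 : max (Φ r - lam ^ 2 / r ^ 2 - μ) 0 ≤ C / r ^ 4 := by
      have hd := hdec r hr.le
      have : Φ r - lam ^ 2 / r ^ 2 - μ ≤ C / r ^ 4 := by
        have : 0 < lam ^ 2 / r ^ 2 := by positivity
        linarith
      exact max_le this (by positivity)
    calc fI Φ lam p μ r ≤ (C / r ^ 4) ^ p :=
          Real.rpow_le_rpow (le_max_right _ _) h1 hp0
    _ = C ^ p * r ^ (-(4*p)) := by
        rw [Real.div_rpow hC.le (by positivity), ← Real.rpow_natCast r 4,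
          ← Real.rpow_mul hr0.le, Real.rpow_neg hr0.le, div_eq_mul_inv]
        norm_num

lemma continuousOn_intfI {Φ : ℝ → ℝ} (hΦ : HasTF Φ) {lam : ℝ} (hlam : 0 < lam) {p : ℝ}
    (hp : 1/2 ≤ p) :
    ContinuousOn (fun μ => ∫ r in Ioi (0:ℝ), fI Φ lam p μ r) (Ici 0) := by
  intro μ₀ hμ₀
  have hp0 : 0 ≤ p := by linarith
  refine continuousWithinAt_of_dominated (bound := fI Φ lam p 0) ?_ ?_ ?_ ?_
  · filter_upwards [self_mem_nhdsWithin] with μ (hμ : μ ∈ Ici 0)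
    exact ((fI_continuousOn hΦ.1 lam hp0 μ).mono Subset.rfl).aestronglyMeasurable
      measurableSet_Ioi
  · filter_upwards [self_mem_nhdsWithin] with μ (hμ : μ ∈ Ici 0)
    filter_upwards with r
    rw [Real.norm_of_nonneg (fI_nonneg _ _ _ _ _)]
    exact fI_mono hp0 hμ r
  · exact integrable_fI hΦ hlam hp le_rfl
  · filter_upwards with r
    have : Continuous fun μ => fI Φ lam p μ r := by
      apply Continuous.rpow_const
      · exact (continuous_const.sub continuous_id).max continuous_const
      · exact fun x => Or.inr hp0
    exact this.continuousAt.continuousWithinAt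

lemma intfI_zero {Φ : ℝ → ℝ} {lam M : ℝ} (hM : ∀ r, 0 < r → Φ r - lam ^ 2 / r ^ 2 ≤ M)
    {p : ℝ} (hp : p ≠ 0) {μ : ℝ} (hμ : M ≤ μ) :
    (∫ r in Ioi (0:ℝ), fI Φ lam p μ r) = 0 := by
  rw [setIntegral_congr_fun measurableSet_Ioi (g := fun _ => (0:ℝ))
    (fun r hr => ?_), integral_zero]
  have h1 : Φ r - lam ^ 2 / r ^ 2 - μ ≤ 0 := by have := hM r hr; linarith
  simp only [fI, max_eq_right h1, Real.zero_rpow hp]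

lemma exists_pos_of_intfI_pos {Φ : ℝ → ℝ} {lam p μ : ℝ} (hp : p ≠ 0)
    (h : 0 < ∫ r in Ioi (0:ℝ), fI Φ lam p μ r) :
    ∃ r₀, 0 < r₀ ∧ 0 < Φ r₀ - lam ^ 2 / r₀ ^ 2 - μ := by
  by_contra hcon
  push_neg at hcon
  rw [setIntegral_congr_fun measurableSet_Ioi (g := fun _ => (0:ℝ))
    (fun r hr => ?_), integral_zero] at h
  · exact lt_irrefl _ h
  · have h1 : Φ r - lam ^ 2 / r ^ 2 - μ ≤ 0 := hcon r hr
    simp only [fI, max_eq_right h1]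
    exact Real.zero_rpow hp

lemma intfI_strict_mono {Φ : ℝ → ℝ} (hΦ : HasTF Φ) {lam : ℝ} (hlam : 0 < lam) {p : ℝ}
    (hp : 1/2 ≤ p) {μ1 μ2 : ℝ} (hμ1 : 0 ≤ μ1) (h12 : μ1 < μ2)
    (hpos : ∃ r₀, 0 < r₀ ∧ 0 < Φ r₀ - lam ^ 2 / r₀ ^ 2 - μ2) :
    (∫ r in Ioi (0:ℝ), fI Φ lam p μ2 r) < ∫ r in Ioi (0:ℝ), fI Φ lam p μ1 r := by
  have hp0 : 0 < p := by linarith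
  have hi1 := integrable_fI hΦ hlam hp hμ1
  have hi2 := integrable_fI hΦ hlam hp (by linarith : (0:ℝ) ≤ μ2)
  have hdiff : 0 < ∫ r in Ioi (0:ℝ), (fI Φ lam p μ1 - fI Φ lam p μ2) r := by
    rw [setIntegral_pos_iff_support_of_nonneg_ae ?nn (hi1.sub hi2)]
    case nn =>
      filter_upwards with r
      simp only [Pi.zero_apply, Pi.sub_apply, sub_nonneg]
      exact fI_mono (by linarith) h12.le r
    -- positive measure of support
    obtain ⟨r₀, hr₀, hgr₀⟩ := hpos
    set U : Set ℝ := Ioi 0 ∩ (fun r => Φ r - lam ^ 2 / r ^ 2 - μ2) ⁻¹' (Ioi 0) with hU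
    have hUopen : IsOpen U := by
      apply ContinuousOn.isOpen_inter_preimage ?_ isOpen_Ioi isOpen_Ioi
      exact (hΦ.1.sub ((continuousOn_const.div ((continuous_pow 2).continuousOn)
        (fun r hr => pow_ne_zero 2 (ne_of_gt hr))))).sub continuousOn_const
    have hUne : U.Nonempty := ⟨r₀, hr₀, hgr₀⟩
    have hUsub : U ⊆ Function.support (fI Φ lam p μ1 - fI Φ lam p μ2) ∩ Ioi 0 := by
      rintro r ⟨hr1, hr2⟩
      refine ⟨?_, hr1⟩
      have hg2 : 0 < Φ r - lam ^ 2 / r ^ 2 - μ2 := hr2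
      have hg1 : Φ r - lam ^ 2 / r ^ 2 - μ2 < Φ r - lam ^ 2 / r ^ 2 - μ1 := by linarith
      have : fI Φ lam p μ2 r < fI Φ lam p μ1 r := by
        simp only [fI, max_eq_left hg2.le, max_eq_left (by linarith : 0 ≤ Φ r - lam ^ 2 / r ^ 2 - μ1)]
        exact Real.rpow_lt_rpow hg2.le hg1 hp0
      simp only [Function.mem_support, Pi.sub_apply]
      intro hc
      rw [sub_eq_zero] at hc
      exact absurd hc (ne_of_gt this)
    calc (0:ENNReal) < volume U := hUopen.measure_pos volume hUne
    _ ≤ _ := measure_mono hUsub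
  simp only [Pi.sub_apply] at hdiff
  rw [integral_sub hi1 hi2] at hdiff
  linarith

lemma convex_ineq (c μ μs : ℝ) :
    max (c - μs) 0 ^ ((3:ℝ)/2) ≤
      max (c - μ) 0 ^ ((3:ℝ)/2) + 3/2 * (μ - μs) * max (c - μs) 0 ^ ((1:ℝ)/2) := by
  have h32 : ∀ x : ℝ, 0 ≤ x → x ^ ((3:ℝ)/2) = x * Real.sqrt x := by
    intro x hx
    rw [Real.sqrt_eq_rpow, show (3:ℝ)/2 = 1 + 1/2 by norm_num,
      Real.rpow_add' hx (by norm_num), Real.rpow_one]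
  rcases le_or_gt (c - μs) 0 with ht | ht
  · rw [max_eq_right ht, Real.zero_rpow (by norm_num), Real.zero_rpow (by norm_num)]
    have := Real.rpow_nonneg (le_max_right (c - μ) 0) ((3:ℝ)/2)
    linarith
  · rw [max_eq_left ht.le, h32 _ ht.le, show ((1:ℝ)/2) = (1/2:ℝ) by norm_num,
      ← Real.sqrt_eq_rpow]
    rcases le_or_gt (c - μ) 0 with hs | hs
    · rw [max_eq_right hs, Real.zero_rpow (by norm_num)]
      have h1 : 0 ≤ Real.sqrt (c - μs) := Real.sqrt_nonneg _
      have h2 : c - μs ≤ 3/2 * (μ - μs) := by linarith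
      nlinarith
    · rw [max_eq_left hs.le, h32 _ hs.le]
      have hu := Real.sq_sqrt ht.le
      have hv := Real.sq_sqrt hs.le
      have hu0 := Real.sqrt_nonneg (c - μs)
      have hv0 := Real.sqrt_nonneg (c - μ)
      set u := Real.sqrt (c - μs)
      set v := Real.sqrt (c - μ)
      have key : 0 ≤ (v - u)^2 * (2*v + u) :=
        mul_nonneg (sq_nonneg _) (by positivity)
      nlinarith [key, hu, hv]

lemma eG_sub_le {Φ : ℝ → ℝ} (hΦ : HasTF Φ) {lam : ℝ} (hlam : 0 < lam) {μs μ n : ℝ}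
    (hμs : 0 ≤ μs) (hμ : 0 ≤ μ) (hn : nSC Φ lam μs = n) :
    eG Φ lam μ - μ * n ≤ eG Φ lam μs - μs * n := by
  have h32 : (1:ℝ)/2 ≤ 3/2 := by norm_num
  have hiA := integrable_fI hΦ hlam h32 hμ
  have hiB := integrable_fI hΦ hlam h32 hμs
  have hiD := integrable_fI hΦ hlam (le_refl ((1:ℝ)/2)) hμs
  set A := ∫ r in Ioi (0:ℝ), fI Φ lam ((3:ℝ)/2) μ r with hA
  set B := ∫ r in Ioi (0:ℝ), fI Φ lam ((3:ℝ)/2) μs r with hB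
  set D := ∫ r in Ioi (0:ℝ), fI Φ lam ((1:ℝ)/2) μs r with hD
  have key : B ≤ A + 3/2 * (μ - μs) * D := by
    have hmono : ∀ r, fI Φ lam ((3:ℝ)/2) μs r ≤
        fI Φ lam ((3:ℝ)/2) μ r + 3/2 * (μ - μs) * fI Φ lam ((1:ℝ)/2) μs r :=
      fun r => convex_ineq _ _ _
    calc B ≤ ∫ r in Ioi (0:ℝ),
          (fI Φ lam ((3:ℝ)/2) μ r + 3/2 * (μ - μs) * fI Φ lam ((1:ℝ)/2) μs r) :=
        integral_mono hiB (hiA.add (hiD.const_mul _)) hmono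
    _ = A + 3/2 * (μ - μs) * D := by
        rw [integral_add hiA (hiD.const_mul _), integral_const_mul]
  have hgA : eG Φ lam μ = -(2/(3*π)) * A := rfl
  have hgB : eG Φ lam μs = -(2/(3*π)) * B := rfl
  have hnD : nSC Φ lam μs = (1/π) * D := rfl
  rw [← hn, hgA, hgB, hnD]
  have hπ : (0:ℝ) < π := Real.pi_pos
  have hinv : (0:ℝ) < π⁻¹ := by positivity
  have h23 : (2:ℝ)/(3*π) = 2/3 * π⁻¹ := by field_simp
  rw [h23, one_div]
  nlinarith [mul_le_mul_of_nonneg_left key hinv.le]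

theorem eCan_attained (Φ : ℝ → ℝ) (hΦ : HasTF Φ) (lam : ℝ) (hlam : 0 < lam)
    (n : ℝ) (hn0 : 0 < n) (hn1 : n < nSC Φ lam 0) :
    ∃ μs : ℝ, 0 < μs ∧ nSC Φ lam μs = n ∧
      (∀ μ : ℝ, 0 < μ → nSC Φ lam μ = n → μ = μs) ∧
      eCan Φ lam n = eG Φ lam μs - μs * n := by
  obtain ⟨M, hM0, hM⟩ := bound_above hΦ hlam
  have hnSCdef : nSC Φ lam = fun μ => (1/π) * ∫ r in Ioi (0:ℝ), fI Φ lam ((1:ℝ)/2) μ r := rfl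
  have hcont' : ContinuousOn (nSC Φ lam) (Ici 0) := by
    rw [hnSCdef]
    exact continuousOn_const.mul (continuousOn_intfI hΦ hlam (le_refl ((1:ℝ)/2)))
  have hend : nSC Φ lam M = 0 := by
    rw [hnSCdef]
    simp only
    rw [intfI_zero hM (by norm_num : ((1:ℝ)/2) ≠ 0) le_rfl, mul_zero]
  have hsub : Icc (nSC Φ lam M) (nSC Φ lam 0) ⊆ nSC Φ lam '' Icc 0 M :=
    intermediate_value_Icc' hM0.le (hcont'.mono Icc_subset_Ici_self)
  obtain ⟨μs, hμsmem, hμsval⟩ := hsub ⟨by rw [hend]; exact hn0.le, hn1.le⟩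
  have hμs0 : 0 < μs := by
    rcases eq_or_lt_of_le hμsmem.1 with h | h
    · exfalso; rw [← h] at hμsval; rw [hμsval] at hn1; exact lt_irrefl _ hn1
    · exact h
  have hpos : ∀ μ' : ℝ, nSC Φ lam μ' = n →
      ∃ r₀, 0 < r₀ ∧ 0 < Φ r₀ - lam ^ 2 / r₀ ^ 2 - μ' := by
    intro μ' hval
    apply exists_pos_of_intfI_pos (by norm_num : ((1:ℝ)/2) ≠ 0)
    have hI : (1/π) * (∫ r in Ioi (0:ℝ), fI Φ lam ((1:ℝ)/2) μ' r) = n := hval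
    by_contra hle
    push_neg at hle
    have : (1/π) * (∫ r in Ioi (0:ℝ), fI Φ lam ((1:ℝ)/2) μ' r) ≤ 0 :=
      mul_nonpos_of_nonneg_of_nonpos (by positivity) hle
    linarith
  have hlt : ∀ μ1 μ2 : ℝ, 0 ≤ μ1 → μ1 < μ2 → nSC Φ lam μ2 = n →
      nSC Φ lam μ2 < nSC Φ lam μ1 := by
    intro μ1 μ2 hμ1 h12 hval
    have hstrict := intfI_strict_mono hΦ hlam (le_refl ((1:ℝ)/2)) hμ1 h12 (hpos μ2 hval)
    rw [hnSCdef]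
    exact mul_lt_mul_of_pos_left hstrict (by positivity)
  have huniq : ∀ μ : ℝ, 0 < μ → nSC Φ lam μ = n → μ = μs := by
    intro μ hμ hval
    rcases lt_trichotomy μ μs with h | h | h
    · exfalso
      have := hlt μ μs hμ.le h hμsval
      rw [hval, hμsval] at this; exact lt_irrefl _ this
    · exact h
    · exfalso
      have := hlt μs μ hμs0.le h hval
      rw [hval, hμsval] at this; exact lt_irrefl _ this
  refine ⟨μs, hμs0, hμsval, huniq, ?_⟩
  apply IsGreatest.csSup_eq
  constructor
  · exact ⟨μs, hμs0.le, rfl⟩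
  · rintro y ⟨μ, hμ, rfl⟩
    exact eG_sub_le hΦ hlam hμs0.le hμ hμsval
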